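/- Let ω be a weight on [0,1] satisfying the dyadic reverse Carleson condition of order min{2/p, 2/p'} with constant C, where 1 < p < ∞ and 1/p + 1/p' = 1. Then ‖∑_{I∈Λ} H_I/‖H_I‖_{p,ω}‖_{X^p(ω)} ≈ (card Λ)^{1/p} for all finite families Λ of dyadic intervals, with implicit constants depending only on C and p. In particular the normalized Haar basis is democratic in X^p(ω). -/

import Mathlib

open MeasureTheory Set

noncomputable def dyadicI (n k : ℕ) : Set ℝ := Set.Ico ((k : ℝ) / 2 ^ n) (((k : ℝ) + 1) / 2 ^ n)

def IsDyadic (I : ℕ × ℕ) : Prop := I.2 < 2 ^ I.1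

noncomputable def wInt (w : ℝ → ℝ) (I : ℕ × ℕ) : ℝ := ∫ x in dyadicI I.1 I.2, w x

def ancestors (J : ℕ × ℕ) : Set (ℕ × ℕ) :=
  {I | IsDyadic I ∧ dyadicI J.1 J.2 ⊆ dyadicI I.1 I.2}

noncomputable def XnormOne (w : ℝ → ℝ) (p : ℝ) (Λ : Finset (ℕ × ℕ)) : ℝ :=
  (∫ x in Set.Ico (0 : ℝ) 1,
      (∑ I ∈ Λ, Set.indicator (dyadicI I.1 I.2) (fun _ => (wInt w I) ^ (-(2 / p))) x) ^ (p / 2)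
        * w x) ^ (1 / p)

lemma dyadicI_lt {n k : ℕ} : ((k:ℝ)) / 2 ^ n < ((k:ℝ) + 1) / 2 ^ n := by
  apply div_lt_div_of_pos_right (by linarith) (by positivity)

lemma dyadicI_level_le {n k m l : ℕ} (h : dyadicI n k ⊆ dyadicI m l) : m ≤ n := by
  rw [dyadicI, dyadicI, Set.Ico_subset_Ico_iff dyadicI_lt] at h
  obtain ⟨h1, h2⟩ := h
  have hm : (0:ℝ) < 2 ^ m := by positivity
  have hn : (0:ℝ) < 2 ^ n := by positivity
  have : (2:ℝ) ^ m ≤ 2 ^ n := by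
    rw [div_le_div_iff₀ hn hm] at h2
    rw [div_le_div_iff₀ hm hn] at h1
    nlinarith
  exact_mod_cast (pow_le_pow_iff_right₀ (by norm_num : (1:ℝ) < 2)).mp this

lemma ancestors_finite (J : ℕ × ℕ) : (ancestors J).Finite := by
  apply Set.Finite.subset (Set.finite_Iic (J.1, 2 ^ J.1))
  intro I hI
  obtain ⟨hIdy, hsub⟩ := hI
  have h1 : I.1 ≤ J.1 := dyadicI_level_le hsub
  have h2 : I.2 ≤ 2 ^ J.1 := le_trans hIdy.le (Nat.pow_le_pow_right (by norm_num) h1)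
  exact ⟨h1, h2⟩

lemma sum_le_tsum_ancestors (f : ℕ × ℕ → ℝ) (hf : ∀ I, 0 ≤ f I) (J : ℕ × ℕ)
    (s : Finset (ℕ × ℕ)) (hs : ∀ I ∈ s, I ∈ ancestors J) :
    ∑ I ∈ s, f I ≤ ∑' I : ancestors J, f I.1 := by
  classical
  have : Finite (ancestors J) := (ancestors_finite J).to_subtype
  have hsumm : Summable (fun I : ancestors J => f I.1) := Summable.of_finite
  let t : Finset (ancestors J) := s.attach.map
    ⟨fun i => ⟨i.1, hs i.1 i.2⟩, by
      intro a b hab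
      simp only [Subtype.mk.injEq] at hab
      exact Subtype.ext hab⟩
  calc ∑ I ∈ s, f I = ∑ i ∈ s.attach, f i.1 := (Finset.sum_attach s f).symm
    _ = ∑ i ∈ t, f i.1 := by rw [Finset.sum_map]; rfl
    _ ≤ ∑' I : ancestors J, f I.1 := Summable.sum_le_tsum t (fun i _ => hf _) hsumm

lemma dyadicI_zero : dyadicI 0 0 = Set.Ico (0:ℝ) 1 := by simp [dyadicI]

lemma dyadicI_subset_unit {n k : ℕ} (h : k < 2 ^ n) : dyadicI n k ⊆ Set.Ico (0:ℝ) 1 := by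
  intro x hx
  obtain ⟨h1, h2⟩ := hx
  have h2n : (0:ℝ) < 2 ^ n := by positivity
  refine ⟨le_trans (by positivity) h1, ?_⟩
  have : ((k:ℝ) + 1) / 2 ^ n ≤ 1 := by
    rw [div_le_one h2n]
    have : (k:ℝ) + 1 ≤ (2:ℝ) ^ n := by exact_mod_cast h
    simpa using this
  exact lt_of_lt_of_le h2 this

lemma dyadic_nested {n k m l : ℕ} (hmn : m ≤ n) {x : ℝ}
    (hx1 : x ∈ dyadicI n k) (hx2 : x ∈ dyadicI m l) : dyadicI n k ⊆ dyadicI m l := by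
  obtain ⟨h1, h2⟩ := hx1
  obtain ⟨h3, h4⟩ := hx2
  have hpow : (2:ℝ) ^ m * 2 ^ (n - m) = 2 ^ n := by
    rw [← pow_add]; congr 1; omega
  have hm : (0:ℝ) < 2 ^ m := by positivity
  have hn : (0:ℝ) < 2 ^ n := by positivity
  have hd : ∀ j : ℕ, ((j:ℝ) * 2 ^ (n - m)) / 2 ^ n = (j:ℝ) / 2 ^ m := by
    intro j
    rw [← hpow]; field_simp
  have hA : l * 2 ^ (n - m) ≤ k := by
    by_contra hA
    have : (k:ℝ) + 1 ≤ (l * 2 ^ (n - m) : ℕ) := by exact_mod_cast (by omega : k + 1 ≤ l * 2 ^ (n-m))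
    have hle : ((k:ℝ) + 1) / 2 ^ n ≤ ((l * 2 ^ (n-m) : ℕ) : ℝ) / 2 ^ n := by gcongr
    rw [Nat.cast_mul, Nat.cast_pow, Nat.cast_ofNat, hd l] at hle
    linarith
  have hB : k + 1 ≤ (l + 1) * 2 ^ (n - m) := by
    by_contra hB
    have : ((l + 1) * 2 ^ (n-m) : ℕ) ≤ (k:ℝ) := by exact_mod_cast (by omega : (l+1) * 2 ^ (n-m) ≤ k)
    have hle : (((l+1) * 2 ^ (n-m) : ℕ) : ℝ) / 2 ^ n ≤ (k:ℝ) / 2 ^ n := by gcongr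
    rw [Nat.cast_mul, Nat.cast_pow, Nat.cast_ofNat, hd (l+1)] at hle
    push_cast at hle
    linarith
  rw [dyadicI, dyadicI, Set.Ico_subset_Ico_iff dyadicI_lt]
  constructor
  · have hc : ((l * 2 ^ (n-m) : ℕ) : ℝ) ≤ (k:ℝ) := by exact_mod_cast hA
    have : ((l * 2 ^ (n-m) : ℕ) : ℝ) / 2 ^ n ≤ (k:ℝ) / 2 ^ n := by gcongr
    rw [Nat.cast_mul, Nat.cast_pow, Nat.cast_ofNat, hd l] at this
    linarith
  · have : ((k:ℝ) + 1) / 2 ^ n ≤ (((l+1) * 2 ^ (n-m) : ℕ) : ℝ) / 2 ^ n := by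
      have hc : ((k:ℝ) + 1) ≤ (((l+1) * 2 ^ (n-m) : ℕ) : ℝ) := by exact_mod_cast hB
      gcongr
    rw [Nat.cast_mul, Nat.cast_pow, Nat.cast_ofNat, hd (l+1)] at this
    push_cast at this
    linarith

-- key Bernoulli-type inequality
lemma key_bern {r : ℝ} (hr : 1 ≤ r) {X y S : ℝ} (hX : 0 ≤ X) (hy : 0 ≤ y)
    (hS : S = X + y) : S ^ r ≤ X ^ r + r * y * S ^ (r - 1) := by
  rcases eq_or_lt_of_le (by linarith : (0:ℝ) ≤ S) with h0 | hSpos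
  · have hX0 : X = 0 := by linarith
    have hy0 : y = 0 := by linarith
    rw [← h0, hX0, hy0, Real.zero_rpow (by linarith : r ≠ 0)]
    simp
  · have hber := one_add_mul_self_le_rpow_one_add
      (s := X / S - 1) (by
        have : 0 ≤ X / S := div_nonneg hX hSpos.le
        linarith) hr
    have h1 : (1 : ℝ) + (X / S - 1) = X / S := by ring
    rw [h1, Real.div_rpow hX hSpos.le] at hber
    have hSr : (0:ℝ) < S ^ r := Real.rpow_pos_of_pos hSpos r
    have hsub : S ^ (r - 1) = S ^ r / S := by
      rw [Real.rpow_sub hSpos, Real.rpow_one]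
    have := mul_le_mul_of_nonneg_right hber hSr.le
    rw [div_mul_cancel₀ _ (ne_of_gt hSr)] at this
    -- this : (1 + r * (X / S - 1)) * S ^ r ≤ X ^ r
    have hXS : X / S - 1 = -y / S := by
      field_simp
      linarith
    rw [hXS] at this
    have hexp : (1 + r * (-y / S)) * S ^ r = S ^ r - r * y * (S ^ r / S) := by
      field_simp
      ring
    rw [hexp, ← hsub] at this
    linarith

-- telescoping lemma
lemma tele {ι : Type*} [DecidableEq ι] {r C : ℝ} (hr : 1 ≤ r) (hC : 0 < C) (a : ι → ℝ)
    (ℓ : ι → ℕ) (s : Finset ι) :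
    (∀ i ∈ s, 0 < a i) →
    (∀ i ∈ s, ∑ j ∈ s.filter (fun j => ℓ j ≤ ℓ i), a j ≤ C * a i) →
    (∑ j ∈ s, a j) ^ r ≤ r * C ^ (r - 1) * ∑ j ∈ s, a j ^ r := by
  induction s using Finset.strongInduction with
  | _ s ih =>
    intro hpos hH
    rcases s.eq_empty_or_nonempty with rfl | hne
    · simp [Real.zero_rpow (by linarith : r ≠ 0)]
    · obtain ⟨i0, hi0s, hi0⟩ := s.exists_max_image ℓ hne
      have hXnn : (0:ℝ) ≤ ∑ j ∈ s.erase i0, a j :=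
        Finset.sum_nonneg fun j hj => (hpos j (Finset.mem_of_mem_erase hj)).le
      have hsum : ∑ j ∈ s.erase i0, a j + a i0 = ∑ j ∈ s, a j :=
        Finset.sum_erase_add s a hi0s
      have hkey := key_bern hr hXnn (hpos i0 hi0s).le hsum.symm
      have hfull : ∑ j ∈ s, a j ≤ C * a i0 := by
        have := hH i0 hi0s
        rwa [Finset.filter_true_of_mem (fun j hj => hi0 j hj)] at this
      have hSnn : (0:ℝ) ≤ ∑ j ∈ s, a j := Finset.sum_nonneg fun j hj => (hpos j hj).le
      have hmono : (∑ j ∈ s, a j) ^ (r - 1) ≤ (C * a i0) ^ (r - 1) :=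
        Real.rpow_le_rpow hSnn hfull (by linarith)
      have hsplit : (C * a i0) ^ (r - 1) = C ^ (r - 1) * (a i0) ^ (r - 1) :=
        Real.mul_rpow hC.le (hpos i0 hi0s).le
      have hai : a i0 * (a i0) ^ (r - 1) = (a i0) ^ r := by
        nth_rewrite 1 [← Real.rpow_one (a i0)]
        rw [← Real.rpow_add (hpos i0 hi0s)]
        ring_nf
      have hIH := ih (s.erase i0) (Finset.erase_ssubset hi0s)
        (fun j hj => hpos j (Finset.mem_of_mem_erase hj))
        (fun i hi => by
          refine le_trans (Finset.sum_le_sum_of_subset_of_nonneg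
            (Finset.filter_subset_filter _ (Finset.erase_subset i0 s)) ?_) (hH i (Finset.mem_of_mem_erase hi))
          intro j hj _
          exact (hpos j (Finset.mem_filter.mp hj).1).le)
      have hsum2 : ∑ j ∈ s.erase i0, a j ^ r + a i0 ^ r = ∑ j ∈ s, a j ^ r :=
        Finset.sum_erase_add s _ hi0s
      have hCpos : (0:ℝ) < C ^ (r - 1) := Real.rpow_pos_of_pos hC _
      have hstep : r * (a i0) * (∑ j ∈ s, a j) ^ (r - 1) ≤ r * C ^ (r-1) * a i0 ^ r := by
        calc r * (a i0) * (∑ j ∈ s, a j) ^ (r - 1)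
            ≤ r * (a i0) * (C ^ (r - 1) * (a i0) ^ (r - 1)) := by
              rw [← hsplit]
              apply mul_le_mul_of_nonneg_left hmono
              exact mul_nonneg (by linarith) (hpos i0 hi0s).le
          _ = r * C ^ (r-1) * (a i0 * a i0 ^ (r-1)) := by ring
          _ = r * C ^ (r-1) * a i0 ^ r := by rw [hai]
      calc (∑ j ∈ s, a j) ^ r
          ≤ (∑ j ∈ s.erase i0, a j) ^ r + r * (a i0) * (∑ j ∈ s, a j) ^ (r - 1) := hkey
        _ ≤ r * C ^ (r-1) * ∑ j ∈ s.erase i0, a j ^ r + r * C ^ (r-1) * a i0 ^ r := by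
            exact add_le_add hIH hstep
        _ = r * C ^ (r-1) * ∑ j ∈ s, a j ^ r := by rw [← hsum2]; ring

-- Cauchy-Schwarz lemma
lemma cs {ι : Type*} {u v C : ℝ} (hu : 0 < u) (hv : 0 < v) (huv : u + v = 2) (hC : 0 < C)
    (s : Finset ι) (b : ι → ℝ) (hb : ∀ i ∈ s, 0 < b i)
    (Hv : ∑ j ∈ s, b j ^ v ≤ C * (∑ j ∈ s, b j) ^ v) :
    (∑ j ∈ s, b j) ^ u ≤ C * ∑ j ∈ s, b j ^ u := by
  rcases s.eq_empty_or_nonempty with rfl | hne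
  · simp [Real.zero_rpow (by linarith : u ≠ 0)]
  · have hS : (0:ℝ) < ∑ j ∈ s, b j := Finset.sum_pos hb hne
    have hcs := Finset.sum_mul_sq_le_sq_mul_sq s (fun i => b i ^ (u/2)) (fun i => b i ^ (v/2))
    have h1 : ∀ i ∈ s, b i ^ (u/2) * b i ^ (v/2) = b i := by
      intro i hi
      rw [← Real.rpow_add (hb i hi)]
      rw [show u/2 + v/2 = 1 by linarith]
      exact Real.rpow_one _
    have h2 : ∀ i ∈ s, (b i ^ (u/2)) ^ 2 = b i ^ u := by
      intro i hi
      rw [← Real.rpow_natCast (b i ^ (u/2)) 2, ← Real.rpow_mul (hb i hi).le]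
      norm_num
    have h3 : ∀ i ∈ s, (b i ^ (v/2)) ^ 2 = b i ^ v := by
      intro i hi
      rw [← Real.rpow_natCast (b i ^ (v/2)) 2, ← Real.rpow_mul (hb i hi).le]
      norm_num
    rw [Finset.sum_congr rfl h1, Finset.sum_congr rfl h2, Finset.sum_congr rfl h3] at hcs
    have hSv : (0:ℝ) < (∑ j ∈ s, b j) ^ v := Real.rpow_pos_of_pos hS v
    have hsq : (∑ j ∈ s, b j) ^ 2 = (∑ j ∈ s, b j) ^ u * (∑ j ∈ s, b j) ^ v := by
      rw [← Real.rpow_add hS, huv, ← Real.rpow_natCast _ 2]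
      norm_num
    have hsumu : (0:ℝ) ≤ ∑ j ∈ s, b j ^ u :=
      Finset.sum_nonneg fun j hj => (Real.rpow_pos_of_pos (hb j hj) u).le
    have hchain : (∑ j ∈ s, b j) ^ u * (∑ j ∈ s, b j) ^ v
        ≤ (C * ∑ j ∈ s, b j ^ u) * (∑ j ∈ s, b j) ^ v := by
      rw [← hsq]
      calc (∑ j ∈ s, b j) ^ 2 ≤ (∑ j ∈ s, b j ^ u) * (∑ j ∈ s, b j ^ v) := hcs
        _ ≤ (∑ j ∈ s, b j ^ u) * (C * (∑ j ∈ s, b j) ^ v) :=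
            mul_le_mul_of_nonneg_left Hv hsumu
        _ = (C * ∑ j ∈ s, b j ^ u) * (∑ j ∈ s, b j) ^ v := by ring
    exact le_of_mul_le_mul_right hchain hSv

-- superadditivity r ≥ 1
lemma super {ι : Type*} {r : ℝ} (hr : 1 ≤ r) (s : Finset ι) (a : ι → ℝ)
    (ha : ∀ i ∈ s, 0 < a i) : ∑ i ∈ s, a i ^ r ≤ (∑ i ∈ s, a i) ^ r := by
  rcases s.eq_empty_or_nonempty with rfl | hne
  · simp [Real.zero_rpow (by linarith : r ≠ 0)]
  · have hS : (0:ℝ) < ∑ j ∈ s, a j := Finset.sum_pos ha hne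
    calc ∑ i ∈ s, a i ^ r ≤ ∑ i ∈ s, a i * (∑ j ∈ s, a j) ^ (r - 1) := by
          apply Finset.sum_le_sum
          intro i hi
          have : a i ^ r = a i * a i ^ (r - 1) := by
            nth_rewrite 2 [← Real.rpow_one (a i)]
            rw [← Real.rpow_add (ha i hi)]
            ring_nf
          rw [this]
          apply mul_le_mul_of_nonneg_left _ (ha i hi).le
          exact Real.rpow_le_rpow (ha i hi).le
            (Finset.single_le_sum (fun j hj => (ha j hj).le) hi) (by linarith)
      _ = (∑ j ∈ s, a j) * (∑ j ∈ s, a j) ^ (r - 1) := by rw [← Finset.sum_mul]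
      _ = (∑ j ∈ s, a j) ^ r := by
          nth_rewrite 1 [← Real.rpow_one (∑ j ∈ s, a j)]
          rw [← Real.rpow_add hS]
          ring_nf

-- subadditivity r ≤ 1
lemma subadd {ι : Type*} {r : ℝ} (hr0 : 0 < r) (hr : r ≤ 1) (s : Finset ι) (a : ι → ℝ)
    (ha : ∀ i ∈ s, 0 < a i) : (∑ i ∈ s, a i) ^ r ≤ ∑ i ∈ s, a i ^ r := by
  rcases s.eq_empty_or_nonempty with rfl | hne
  · simp [Real.zero_rpow (by linarith : r ≠ 0)]
  · have hS : (0:ℝ) < ∑ j ∈ s, a j := Finset.sum_pos ha hne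
    have hxr : (∑ j ∈ s, a j) * (∑ j ∈ s, a j) ^ (r-1) = (∑ j ∈ s, a j) ^ r := by
      nth_rewrite 1 [← Real.rpow_one (∑ j ∈ s, a j)]
      rw [← Real.rpow_add hS]
      ring_nf
    calc (∑ j ∈ s, a j) ^ r = (∑ j ∈ s, a j) * (∑ j ∈ s, a j) ^ (r - 1) := hxr.symm
      _ = ∑ i ∈ s, a i * (∑ j ∈ s, a j) ^ (r - 1) := by rw [← Finset.sum_mul]
      _ ≤ ∑ i ∈ s, a i ^ r := by
          apply Finset.sum_le_sum
          intro i hi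
          have h1 : (∑ j ∈ s, a j) ^ (r - 1) ≤ a i ^ (r - 1) :=
            Real.rpow_le_rpow_of_nonpos (ha i hi)
              (Finset.single_le_sum (fun j hj => (ha j hj).le) hi) (by linarith)
          calc a i * (∑ j ∈ s, a j) ^ (r - 1) ≤ a i * a i ^ (r - 1) :=
                mul_le_mul_of_nonneg_left h1 (ha i hi).le
            _ = a i ^ r := by
                nth_rewrite 1 [← Real.rpow_one (a i)]
                rw [← Real.rpow_add (ha i hi)]
                ring_nf

theorem stmt11 (w : ℝ → ℝ) (p C : ℝ) (hp : 1 < p) (hC : 0 < C)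
    (hw : ∀ x, 0 ≤ w x) (hpos : ∀ I, IsDyadic I → 0 < wInt w I)
    -- dyadic reverse Carleson condition of order `min{2/p, 2/p'}` with constant `C`,
    -- where `p' = p/(p-1)`
    (hDRCC : ∀ J, IsDyadic J →
      ∑' I : ancestors J, (wInt w I.1) ^ (-(min (2 / p) (2 / (p / (p - 1)))))
        ≤ C * (wInt w J) ^ (-(min (2 / p) (2 / (p / (p - 1)))))) :
    ∃ c > (0 : ℝ), ∃ c' > (0 : ℝ), ∀ Λ : Finset (ℕ × ℕ), (∀ I ∈ Λ, IsDyadic I) →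
      c * (Λ.card : ℝ) ^ (1 / p) ≤ XnormOne w p Λ ∧
      XnormOne w p Λ ≤ c' * (Λ.card : ℝ) ^ (1 / p) := by
  classical
  have hp0 : (0:ℝ) < p := by linarith
  set q : ℝ := p / (p - 1) with hq_def
  have hq1 : 1 < q := by
    rw [hq_def, lt_div_iff₀ (by linarith)]; linarith
  have hq0 : 0 < q := by linarith
  set a : ℝ := min (2 / p) (2 / q) with ha_def
  have ha_pos : 0 < a := lt_min (by positivity) (by positivity)
  have hwnn : ∀ I : ℕ × ℕ, 0 ≤ wInt w I := fun I =>
    setIntegral_nonneg measurableSet_Ico (fun y _ => hw y)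
  -- C ≥ 1
  have hC1 : 1 ≤ C := by
    have h00 : IsDyadic (0,0) := by simp [IsDyadic]
    have ht := hDRCC (0,0) h00
    have hmem : (0,0) ∈ ancestors (0,0) := ⟨h00, subset_rfl⟩
    have hself := sum_le_tsum_ancestors (fun I => wInt w I ^ (-a))
      (fun I => Real.rpow_nonneg (hwnn I) _) (0,0) {(0,0)} (by simpa using hmem)
    rw [Finset.sum_singleton] at hself
    have hpos0 : 0 < wInt w (0,0) ^ (-a) := Real.rpow_pos_of_pos (hpos _ h00) _
    nlinarith [le_trans hself ht]
  -- integrability of w on [0,1)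
  have hw01 : IntegrableOn w (Set.Ico (0:ℝ) 1) volume := by
    have h00 := hpos (0,0) (by simp [IsDyadic])
    by_contra hni
    have hd : dyadicI 0 0 = Set.Ico (0:ℝ) 1 := by simp [dyadicI]
    rw [wInt] at h00
    simp only at h00
    rw [hd, integral_undef hni] at h00
    exact lt_irrefl 0 h00
  -- prefix sums controlled by DRCC
  have hprefix : ∀ (Λ : Finset (ℕ × ℕ)), (∀ I ∈ Λ, IsDyadic I) → ∀ x : ℝ,
      ∀ I ∈ Λ.filter (fun I => x ∈ dyadicI I.1 I.2),
        ∑ J ∈ (Λ.filter (fun I => x ∈ dyadicI I.1 I.2)).filter (fun J => J.1 ≤ I.1),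
            wInt w J ^ (-a) ≤ C * wInt w I ^ (-a) := by
    intro Λ hΛ x I hI
    have hIdy : IsDyadic I := hΛ I (Finset.mem_filter.mp hI).1
    have hIx : x ∈ dyadicI I.1 I.2 := (Finset.mem_filter.mp hI).2
    refine le_trans (sum_le_tsum_ancestors (fun J => wInt w J ^ (-a))
      (fun J => Real.rpow_nonneg (hwnn J) _) I _ ?_) (hDRCC I hIdy)
    intro J hJ
    obtain ⟨hJ1, hJ2⟩ := Finset.mem_filter.mp hJ
    obtain ⟨hJ3, hJ4⟩ := Finset.mem_filter.mp hJ1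
    exact ⟨hΛ J hJ3, dyadic_nested hJ2 hIx hJ4⟩
  -- rpow helper
  have hpow1 : ∀ y : ℝ, 0 < y → (y ^ (-(2/p))) ^ (p/2) = y ^ (-(1:ℝ)) := by
    intro y hy
    rw [← Real.rpow_mul hy.le]
    congr 1
    field_simp
  have hpow2 : ∀ y : ℝ, 0 < y → ∀ e : ℝ, (y ^ (-(1:ℝ))) ^ e = y ^ (-e) := by
    intro y hy e
    rw [← Real.rpow_mul hy.le]
    congr 1
    ring
  -- key pointwise bounds
  obtain ⟨Ku, hKupos, hkey⟩ : ∃ Ku > (0:ℝ), ∀ (Λ : Finset (ℕ × ℕ)), (∀ I ∈ Λ, IsDyadic I) →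
      ∀ x : ℝ,
      (∑ I ∈ Λ.filter (fun I => x ∈ dyadicI I.1 I.2), wInt w I ^ (-(2/p))) ^ (p/2)
          ≤ Ku * ∑ I ∈ Λ.filter (fun I => x ∈ dyadicI I.1 I.2), wInt w I ^ (-(1:ℝ))
      ∧ ∑ I ∈ Λ.filter (fun I => x ∈ dyadicI I.1 I.2), wInt w I ^ (-(1:ℝ))
          ≤ C ^ (p/2) * (∑ I ∈ Λ.filter (fun I => x ∈ dyadicI I.1 I.2),
              wInt w I ^ (-(2/p))) ^ (p/2) := by
    rcases le_or_gt p 2 with hple | hpgt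
    · -- p ≤ 2
      refine ⟨1, one_pos, ?_⟩
      intro Λ hΛ x
      set T := Λ.filter (fun I => x ∈ dyadicI I.1 I.2) with hT_def
      have hTdy : ∀ I ∈ T, IsDyadic I := fun I hI => hΛ I (Finset.mem_filter.mp hI).1
      have hTpos : ∀ I ∈ T, 0 < wInt w I := fun I hI => hpos I (hTdy I hI)
      have haq : a = 2 / q := by
        apply min_eq_right
        have hpq : p ≤ q := by
          rw [hq_def, le_div_iff₀ (by linarith)]
          nlinarith
        rw [div_le_div_iff₀ hq0 hp0]
        nlinarith
      constructor
      · -- upper via subadditivity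
        rw [one_mul]
        have := subadd (r := p/2) (by positivity) (by linarith) T
          (fun I => wInt w I ^ (-(2/p)))
          (fun I hI => Real.rpow_pos_of_pos (hTpos I hI) _)
        refine le_trans this (le_of_eq ?_)
        apply Finset.sum_congr rfl
        intro I hI
        exact hpow1 _ (hTpos I hI)
      · -- lower via Cauchy-Schwarz
        rcases T.eq_empty_or_nonempty with hTe | hTne
        · rw [hTe]
          simp [Real.zero_rpow (by positivity : p/2 ≠ 0)]
        · obtain ⟨I0, hI0T, hI0max⟩ := T.exists_max_image Prod.fst hTne
          have hfull : ∑ J ∈ T, wInt w J ^ (-(2/q)) ≤ C * wInt w I0 ^ (-(2/q)) := by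
            have h := hprefix Λ hΛ x I0 hI0T
            rw [← hT_def] at h
            rw [Finset.filter_true_of_mem (fun J hJ => hI0max J hJ)] at h
            rwa [haq] at h
          set b : ℕ × ℕ → ℝ := fun I => wInt w I ^ (-(1:ℝ)) with hb_def
          have hbpos : ∀ I ∈ T, 0 < b I := fun I hI => Real.rpow_pos_of_pos (hTpos I hI) _
          have hbsum_nn : (0:ℝ) ≤ ∑ J ∈ T, b J :=
            Finset.sum_nonneg fun J hJ => (hbpos J hJ).le
          have huv : 2/p + 2/q = 2 := by
            rw [hq_def]
            field_simp
            ring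
          have hcs := cs (u := 2/p) (v := 2/q) (C := C) (by positivity) (by positivity)
            huv hC T b hbpos ?_
          · -- conclude
            have hbu : ∀ I ∈ T, b I ^ (2/p : ℝ) = wInt w I ^ (-(2/p)) := fun I hI =>
              hpow2 _ (hTpos I hI) _
            rw [Finset.sum_congr rfl hbu] at hcs
            have hS1 : ∑ I ∈ T, wInt w I ^ (-(1:ℝ)) = ∑ J ∈ T, b J := rfl
            rw [hS1]
            have hid : ((∑ J ∈ T, b J) ^ ((2:ℝ)/p)) ^ (p/2) = ∑ J ∈ T, b J := by
              rw [← Real.rpow_mul hbsum_nn]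
              rw [show (2/p) * (p/2) = (1:ℝ) by field_simp]
              exact Real.rpow_one _
            calc ∑ J ∈ T, b J = ((∑ J ∈ T, b J) ^ ((2:ℝ)/p)) ^ (p/2) := hid.symm
              _ ≤ (C * ∑ I ∈ T, wInt w I ^ (-(2/p))) ^ (p/2) :=
                  Real.rpow_le_rpow (Real.rpow_nonneg hbsum_nn _) hcs (by positivity)
              _ = C ^ (p/2) * (∑ I ∈ T, wInt w I ^ (-(2/p))) ^ (p/2) :=
                  Real.mul_rpow hC.le (Finset.sum_nonneg fun I hI =>
                    (Real.rpow_pos_of_pos (hTpos I hI) _).le)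
          · -- the hypothesis Hv
            have hbv : ∀ I ∈ T, b I ^ ((2:ℝ)/q) = wInt w I ^ (-(2/q)) := fun I hI =>
              hpow2 _ (hTpos I hI) _
            rw [Finset.sum_congr rfl hbv]
            refine le_trans hfull ?_
            apply mul_le_mul_of_nonneg_left _ hC.le
            have h1 : wInt w I0 ^ (-(2/q)) = b I0 ^ ((2:ℝ)/q) := (hbv I0 hI0T).symm
            rw [h1]
            exact Real.rpow_le_rpow (hbpos I0 hI0T).le
              (Finset.single_le_sum (fun J hJ => (hbpos J hJ).le) hI0T) (by positivity)
    · -- p > 2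
      refine ⟨(p/2) * C ^ (p/2 - 1), by positivity, ?_⟩
      intro Λ hΛ x
      set T := Λ.filter (fun I => x ∈ dyadicI I.1 I.2) with hT_def
      have hTdy : ∀ I ∈ T, IsDyadic I := fun I hI => hΛ I (Finset.mem_filter.mp hI).1
      have hTpos : ∀ I ∈ T, 0 < wInt w I := fun I hI => hpos I (hTdy I hI)
      have haq : a = 2 / p := by
        apply min_eq_left
        have hqp : q ≤ p := by
          rw [hq_def, div_le_iff₀ (by linarith)]
          nlinarith
        rw [div_le_div_iff₀ hp0 hq0]
        nlinarith
      constructor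
      · -- upper via telescoping
        have htele := tele (r := p/2) (C := C) (by linarith) hC
          (fun I => wInt w I ^ (-(2/p))) (fun I => I.1) T
          (fun I hI => Real.rpow_pos_of_pos (hTpos I hI) _) ?_
        · refine le_trans htele (le_of_eq ?_)
          congr 1
          apply Finset.sum_congr rfl
          intro I hI
          exact hpow1 _ (hTpos I hI)
        · intro I hI
          have h := hprefix Λ hΛ x I hI
          rw [← hT_def, haq] at h
          exact h
      · -- lower via superadditivity
        have hsuper := super (r := p/2) (by linarith) T (fun I => wInt w I ^ (-(2/p)))
          (fun I hI => Real.rpow_pos_of_pos (hTpos I hI) _)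
        have heq : ∑ I ∈ T, wInt w I ^ (-(1:ℝ))
            = ∑ I ∈ T, (wInt w I ^ (-(2/p))) ^ (p/2) := by
          apply Finset.sum_congr rfl
          intro I hI
          exact (hpow1 _ (hTpos I hI)).symm
        rw [heq]
        have hCp : (1:ℝ) ≤ C ^ (p/2) := by
          calc (1:ℝ) = 1 ^ (p/2 : ℝ) := (Real.one_rpow _).symm
            _ ≤ C ^ (p/2) := Real.rpow_le_rpow zero_le_one hC1 (by positivity)
        refine le_trans hsuper ?_
        exact le_mul_of_one_le_left (Real.rpow_nonneg (Finset.sum_nonneg fun I hI =>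
          (Real.rpow_pos_of_pos (hTpos I hI) _).le) _) hCp
  -- now the integral estimates
  refine ⟨(C ^ ((1:ℝ)/2))⁻¹, by positivity, Ku ^ ((1:ℝ)/p),
    Real.rpow_pos_of_pos hKupos _, ?_⟩
  intro Λ hΛ
  set F : ℝ → ℝ := fun x =>
    ∑ I ∈ Λ, Set.indicator (dyadicI I.1 I.2) (fun _ => (wInt w I) ^ (-(2 / p))) x with hF_def
  set G : ℝ → ℝ := fun x =>
    ∑ I ∈ Λ, Set.indicator (dyadicI I.1 I.2) (fun _ => (wInt w I) ^ (-(1:ℝ))) x with hG_def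
  have hF_eq : ∀ x : ℝ, F x = ∑ I ∈ Λ.filter (fun I => x ∈ dyadicI I.1 I.2),
      wInt w I ^ (-(2/p)) := by
    intro x
    rw [hF_def, Finset.sum_filter]
    apply Finset.sum_congr rfl
    intro I _
    rw [Set.indicator_apply]
  have hG_eq : ∀ x : ℝ, G x = ∑ I ∈ Λ.filter (fun I => x ∈ dyadicI I.1 I.2),
      wInt w I ^ (-(1:ℝ)) := by
    intro x
    rw [hG_def, Finset.sum_filter]
    apply Finset.sum_congr rfl
    intro I _
    rw [Set.indicator_apply]
  have hFnn : ∀ x, 0 ≤ F x := by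
    intro x
    rw [hF_eq]
    exact Finset.sum_nonneg fun I _ => Real.rpow_nonneg (hwnn I) _
  have hGnn : ∀ x, 0 ≤ G x := by
    intro x
    rw [hG_eq]
    exact Finset.sum_nonneg fun I _ => Real.rpow_nonneg (hwnn I) _
  -- integrability of G * w and its integral value
  have hGw_eq : (fun x => G x * w x) = fun x => ∑ I ∈ Λ,
      Set.indicator (dyadicI I.1 I.2) (fun y => (wInt w I) ^ (-(1:ℝ)) * w y) x := by
    funext x
    rw [hG_def]
    rw [Finset.sum_mul]
    apply Finset.sum_congr rfl
    intro I _
    by_cases h : x ∈ dyadicI I.1 I.2 <;> simp [h]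
  have hGw_int : Integrable (fun x => G x * w x) (volume.restrict (Set.Ico (0:ℝ) 1)) := by
    rw [hGw_eq]
    apply integrable_finset_sum
    intro I _
    exact (hw01.const_mul _).indicator measurableSet_Ico
  have hdyms : ∀ I : ℕ × ℕ, MeasurableSet (dyadicI I.1 I.2) := fun I => measurableSet_Ico
  have hGw_val : ∫ x in Set.Ico (0:ℝ) 1, G x * w x = (Λ.card : ℝ) := by
    have hint : ∀ I ∈ Λ, Integrable (fun x =>
        Set.indicator (dyadicI I.1 I.2) (fun y => (wInt w I) ^ (-(1:ℝ)) * w y) x)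
        (volume.restrict (Set.Ico (0:ℝ) 1)) :=
      fun I _ => (hw01.const_mul _).indicator (hdyms I)
    rw [hGw_eq, integral_finset_sum _ hint]
    have : ∀ I ∈ Λ, ∫ x in Set.Ico (0:ℝ) 1,
        Set.indicator (dyadicI I.1 I.2) (fun y => (wInt w I) ^ (-(1:ℝ)) * w y) x = 1 := by
      intro I hI
      rw [setIntegral_indicator (hdyms I)]
      rw [Set.inter_eq_self_of_subset_right (dyadicI_subset_unit (hΛ I hI))]
      rw [integral_const_mul]
      rw [Real.rpow_neg_one]
      exact inv_mul_cancel₀ (ne_of_gt (hpos I (hΛ I hI)))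
    rw [Finset.sum_congr rfl this]
    simp
  -- the main integrand
  set Φ : ℝ → ℝ := fun x => (F x) ^ (p/2) * w x with hΦ_def
  have hΦnn : ∀ x, 0 ≤ Φ x := fun x => mul_nonneg (Real.rpow_nonneg (hFnn x) _) (hw x)
  have hΦle : ∀ x, Φ x ≤ Ku * (G x * w x) := by
    intro x
    have h := (hkey Λ hΛ x).1
    rw [← hF_eq, ← hG_eq] at h
    calc Φ x = (F x) ^ (p/2) * w x := rfl
      _ ≤ (Ku * G x) * w x := mul_le_mul_of_nonneg_right h (hw x)
      _ = Ku * (G x * w x) := by ring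
  have hΦge : ∀ x, G x * w x ≤ C ^ (p/2) * Φ x := by
    intro x
    have h := (hkey Λ hΛ x).2
    rw [← hF_eq, ← hG_eq] at h
    calc G x * w x ≤ (C ^ (p/2) * (F x) ^ (p/2)) * w x :=
          mul_le_mul_of_nonneg_right h (hw x)
      _ = C ^ (p/2) * Φ x := by rw [hΦ_def]; ring
  have hFmeas : Measurable F := by
    apply Finset.measurable_sum
    intro I _
    exact Measurable.indicator measurable_const measurableSet_Ico
  have hΦaesm : AEStronglyMeasurable Φ (volume.restrict (Set.Ico (0:ℝ) 1)) := by
    apply AEStronglyMeasurable.mul _ hw01.aestronglyMeasurable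
    exact ((Real.continuous_rpow_const (by positivity : (0:ℝ) ≤ p/2)).measurable.comp hFmeas).aestronglyMeasurable
  have hΦint : Integrable Φ (volume.restrict (Set.Ico (0:ℝ) 1)) := by
    apply Integrable.mono' (hGw_int.const_mul Ku) hΦaesm
    apply ae_of_all
    intro x
    rw [Real.norm_eq_abs, abs_of_nonneg (hΦnn x)]
    exact hΦle x
  have hInt_nn : 0 ≤ ∫ x in Set.Ico (0:ℝ) 1, Φ x :=
    setIntegral_nonneg measurableSet_Ico fun x _ => hΦnn x
  have hupper : ∫ x in Set.Ico (0:ℝ) 1, Φ x ≤ Ku * (Λ.card : ℝ) := by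
    calc ∫ x in Set.Ico (0:ℝ) 1, Φ x ≤ ∫ x in Set.Ico (0:ℝ) 1, Ku * (G x * w x) :=
          integral_mono hΦint (hGw_int.const_mul Ku) hΦle
      _ = Ku * ∫ x in Set.Ico (0:ℝ) 1, G x * w x := integral_const_mul _ _
      _ = Ku * (Λ.card : ℝ) := by rw [hGw_val]
  have hlower : (Λ.card : ℝ) ≤ C ^ (p/2) * ∫ x in Set.Ico (0:ℝ) 1, Φ x := by
    calc (Λ.card : ℝ) = ∫ x in Set.Ico (0:ℝ) 1, G x * w x := hGw_val.symm
      _ ≤ ∫ x in Set.Ico (0:ℝ) 1, C ^ (p/2) * Φ x :=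
          integral_mono hGw_int (hΦint.const_mul _) hΦge
      _ = C ^ (p/2) * ∫ x in Set.Ico (0:ℝ) 1, Φ x := integral_const_mul _ _
  have hXeq : XnormOne w p Λ = (∫ x in Set.Ico (0:ℝ) 1, Φ x) ^ (1/p) := rfl
  constructor
  · -- lower estimate
    rw [hXeq]
    rw [inv_mul_le_iff₀ (Real.rpow_pos_of_pos hC _)]
    calc (Λ.card : ℝ) ^ (1/p)
        ≤ (C ^ (p/2) * ∫ x in Set.Ico (0:ℝ) 1, Φ x) ^ ((1:ℝ)/p) :=
          Real.rpow_le_rpow (Nat.cast_nonneg _) hlower (by positivity)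
      _ = (C ^ (p/2 : ℝ)) ^ ((1:ℝ)/p) * (∫ x in Set.Ico (0:ℝ) 1, Φ x) ^ ((1:ℝ)/p) :=
          Real.mul_rpow (Real.rpow_nonneg hC.le _) hInt_nn
      _ = C ^ ((1:ℝ)/2) * (∫ x in Set.Ico (0:ℝ) 1, Φ x) ^ (1/p) := by
          congr 1
          rw [← Real.rpow_mul hC.le]
          congr 1
          field_simp
  · -- upper estimate
    rw [hXeq]
    calc (∫ x in Set.Ico (0:ℝ) 1, Φ x) ^ (1/p)
        ≤ (Ku * (Λ.card : ℝ)) ^ ((1:ℝ)/p) :=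
          Real.rpow_le_rpow hInt_nn hupper (by positivity)
      _ = Ku ^ ((1:ℝ)/p) * (Λ.card : ℝ) ^ (1/p) :=
          Real.mul_rpow hKupos.le (Nat.cast_nonneg _)
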